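/- Let (Σ, A, X, L, l₀, Δ) be a register automaton and f a CTL(X, L) formula. There exists a finite set W of valuations X → Σ such that ⊨_RA f (i.e., ⟨l₀, v⟩ ⊨ f for every valuation v) if and only if ⟨l₀, w⟩ ⊨ f for every w ∈ W; concretely, any set W containing one representative from each ∼_C-equivalence class of valuations has this property. -/

import Mathlib

/-- A term over registers `X`, formal parameters `p₁,…,pₙ`, and constants from the alphabet. -/
inductive Term (X Sig : Type) (n : ℕ) where
  | reg (x : X)
  | par (i : Fin n)
  | const (c : Sig)

/-- The value of a term under a register valuation `v` and parameter valuation `d`. -/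
def Term.val {X Sig : Type} {n : ℕ} (v : X → Sig) (d : Fin n → Sig) : Term X Sig n → Sig
  | .reg x => v x
  | .par i => d i
  | .const c => c

/-- All constants occurring in the term belong to `C`. -/
def Term.ConstIn {X Sig : Type} {n : ℕ} (C : Finset Sig) : Term X Sig n → Prop
  | .const c => c ∈ C
  | _ => True

/-- An atomic guard: an equality `e = f` or a disequality `e ≠ f` between terms. -/
inductive Atom (X Sig : Type) (n : ℕ) where
  | eq (e f : Term X Sig n)
  | ne (e f : Term X Sig n)

/-- Satisfaction of an atomic guard. -/
def Atom.Sat {X Sig : Type} {n : ℕ} (v : X → Sig) (d : Fin n → Sig) : Atom X Sig n → Prop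
  | .eq e f => Term.val v d e = Term.val v d f
  | .ne e f => Term.val v d e ≠ Term.val v d f

def Atom.ConstIn {X Sig : Type} {n : ℕ} (C : Finset Sig) : Atom X Sig n → Prop
  | .eq e f => Term.ConstIn C e ∧ Term.ConstIn C f
  | .ne e f => Term.ConstIn C e ∧ Term.ConstIn C f

/-- A guard is a finite conjunction of atomic guards. -/
abbrev Guard (X Sig : Type) (n : ℕ) : Type := List (Atom X Sig n)

/-- `v, d ⊨ g`: every conjunct of the guard holds. -/
def Guard.Sat {X Sig : Type} {n : ℕ} (v : X → Sig) (d : Fin n → Sig) (g : Guard X Sig n) : Prop :=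
  ∀ a ∈ g, Atom.Sat v d a

def Guard.ConstIn {X Sig : Type} {n : ℕ} (C : Finset Sig) (g : Guard X Sig n) : Prop :=
  ∀ a ∈ g, Atom.ConstIn C a

/-- An assignment `(x_{k_1} … x_{k_m}) ↦ (e_{l_1} … e_{l_m})`, as a list of pairs. -/
abbrev Assignment (X Sig : Type) (n : ℕ) : Type := List (X × Term X Sig n)

/-- The assigned registers are pairwise distinct. -/
def Assignment.Wf {X Sig : Type} {n : ℕ} (π : Assignment X Sig n) : Prop :=
  (List.map Prod.fst π).Nodup

/-- `⟦π⟧_{v,d}`: the set of valuations `v'` with `v' (x_{k_i})` the value of `e_{l_i}` under `(v,d)`. -/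
def Assignment.Sem {X Sig : Type} {n : ℕ} (π : Assignment X Sig n) (v : X → Sig)
    (d : Fin n → Sig) : Set (X → Sig) :=
  {v' | ∀ p ∈ π, v' p.1 = Term.val v d p.2}

def Assignment.ConstIn {X Sig : Type} {n : ℕ} (C : Finset Sig) (π : Assignment X Sig n) : Prop :=
  ∀ p ∈ π, Term.ConstIn C (p.2 : Term X Sig n)
/-- `u ∼_C v`: there is an automorphism (bijection) of the alphabet which is invariant on the
constants `C` and maps `u` to `v` pointwise. -/
def EquivC {X Sig : Type} (C : Finset Sig) (u v : X → Sig) : Prop :=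
  ∃ σ : Equiv.Perm Sig, (∀ c ∈ C, σ c = c) ∧ ∀ x, σ (u x) = v x

/-- `[v]`: the `∼_C` equivalence class of the valuation `v`. -/
def eqClass {X Sig : Type} (C : Finset Sig) (v : X → Sig) : Set (X → Sig) :=
  {u | EquivC C u v}
/-- A transition `(l, α, g, π, l')` of a register automaton. -/
structure Transition (Sig X A L : Type) (arity : A → ℕ) where
  src : L
  act : A
  guard : Guard X Sig (arity act)
  assign : Assignment X Sig (arity act)
  tgt : L

def Transition.ConstIn {Sig X A L : Type} {arity : A → ℕ} (C : Finset Sig)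
    (t : Transition Sig X A L arity) : Prop :=
  Guard.ConstIn C t.guard ∧ Assignment.ConstIn C t.assign

/-- A register automaton `(Σ, A, X, L, l₀, Δ)` over constants `C`: each action has an arity,
there is an initial location, and a finite set of transitions whose guards and assignments
only mention constants of `C` and assign pairwise distinct registers. -/
structure RegisterAutomaton (Sig X A L : Type) (C : Finset Sig) where
  arity : A → ℕ
  init : L
  Δ : Set (Transition Sig X A L arity)
  finΔ : Δ.Finite
  wf : ∀ t ∈ Δ, Transition.ConstIn C t ∧ Assignment.Wf t.assign

/-- `⟨l, v⟩ →^{α(d)} ⟨l', v'⟩`: some transition `(l, α, g, π, l') ∈ Δ` satisfies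
`v, d ⊨ g` and `v' ∈ ⟦π⟧_{v,d}`. -/
def RegisterAutomaton.Step {Sig X A L : Type} {C : Finset Sig}
    (RA : RegisterAutomaton Sig X A L C) (l : L) (v : X → Sig) (α : A)
    (d : Fin (RA.arity α) → Sig) (l' : L) (v' : X → Sig) : Prop :=
  ∃ (g : Guard X Sig (RA.arity α)) (π : Assignment X Sig (RA.arity α)),
    (⟨l, α, g, π, l'⟩ : Transition Sig X A L RA.arity) ∈ RA.Δ ∧
      Guard.Sat v d g ∧ v' ∈ Assignment.Sem π v d

/-- One step on configurations, for some data symbol `α(d)`. -/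
def RegisterAutomaton.StepAny {Sig X A L : Type} {C : Finset Sig}
    (RA : RegisterAutomaton Sig X A L C) (c c' : L × (X → Sig)) : Prop :=
  ∃ (α : A) (d : Fin (RA.arity α) → Sig), RA.Step c.1 c.2 α d c'.1 c'.2

/-- A configuration `⟨l, v⟩` is reachable: there is a run from the initial location
(with an arbitrary initial valuation) ending in `⟨l, v⟩`. -/
def RegisterAutomaton.Reachable {Sig X A L : Type} {C : Finset Sig}
    (RA : RegisterAutomaton Sig X A L C) (l : L) (v : X → Sig) : Prop :=
  ∃ v₀ : X → Sig, Relation.ReflTransGen RA.StepAny (RA.init, v₀) (l, v)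

/-- `⟨l, S⟩ ⇝ ⟨l', S'⟩` for sets of valuations (representative configurations):
every member of `S` steps to some member of `S'` and vice versa. -/
def RegisterAutomaton.RepStep {Sig X A L : Type} {C : Finset Sig}
    (RA : RegisterAutomaton Sig X A L C) (l : L) (S : Set (X → Sig)) (l' : L)
    (S' : Set (X → Sig)) : Prop :=
  (∀ u ∈ S, ∃ u' ∈ S', ∃ (α : A) (d : Fin (RA.arity α) → Sig), RA.Step l u α d l' u') ∧
  (∀ u' ∈ S', ∃ u ∈ S, ∃ (α : A) (d : Fin (RA.arity α) → Sig), RA.Step l u α d l' u')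
/-- CTL(X, L) formulas. -/
inductive CTL (X Sig L : Type) where
  | loc (l : L)
  | eqReg (x y : X)
  | eqConst (x : X) (c : Sig)
  | not (f : CTL X Sig L)
  | and (f₀ f₁ : CTL X Sig L)
  | EX (f : CTL X Sig L)
  | EU (f₀ f₁ : CTL X Sig L)
  | EG (f : CTL X Sig L)

/-- Every constant appearing in the formula belongs to `C`. -/
def CTL.ConstIn {X Sig L : Type} (C : Finset Sig) : CTL X Sig L → Prop
  | .eqConst _ c => c ∈ C
  | .not f => CTL.ConstIn C f
  | .and f₀ f₁ => CTL.ConstIn C f₀ ∧ CTL.ConstIn C f₁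
  | .EX f => CTL.ConstIn C f
  | .EU f₀ f₁ => CTL.ConstIn C f₀ ∧ CTL.ConstIn C f₁
  | .EG f => CTL.ConstIn C f
  | _ => True

/-- `⟨l, v⟩ ⊨ f`: CTL(X, L) satisfaction over a register automaton. -/
def RegisterAutomaton.Sat {Sig X A L : Type} {C : Finset Sig}
    (RA : RegisterAutomaton Sig X A L C) : CTL X Sig L → L × (X → Sig) → Prop
  | .loc l', c => c.1 = l'
  | .eqReg x y, c => c.2 x = c.2 y
  | .eqConst x cst, c => c.2 x = cst
  | .not f, c => ¬ RA.Sat f c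
  | .and f₀ f₁, c => RA.Sat f₀ c ∧ RA.Sat f₁ c
  | .EX f, c => ∃ c', RA.StepAny c c' ∧ RA.Sat f c'
  | .EU f₀ f₁, c => ∃ (k : ℕ) (p : ℕ → L × (X → Sig)), p 0 = c ∧
      (∀ i < k, RA.StepAny (p i) (p (i + 1))) ∧
      RA.Sat f₁ (p k) ∧ (∀ i < k, RA.Sat f₀ (p i))
  | .EG f, c => ∃ p : ℕ → L × (X → Sig), p 0 = c ∧
      (∀ i, RA.StepAny (p i) (p (i + 1))) ∧ (∀ i, RA.Sat f (p i))
section Aux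

variable {Sig X A L : Type} {C : Finset Sig}

lemma term_val_perm {n : ℕ} (σ : Equiv.Perm Sig) (hσ : ∀ c ∈ C, σ c = c)
    (v : X → Sig) (d : Fin n → Sig) (e : Term X Sig n) (he : Term.ConstIn C e) :
    Term.val (σ ∘ v) (σ ∘ d) e = σ (Term.val v d e) := by
  cases e with
  | reg x => rfl
  | par i => rfl
  | const c => exact (hσ c he).symm

lemma step_perm (RA : RegisterAutomaton Sig X A L C) (σ : Equiv.Perm Sig)
    (hσ : ∀ c ∈ C, σ c = c) {l l' : L} {v v' : X → Sig} {α : A} {d : Fin (RA.arity α) → Sig}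
    (h : RA.Step l v α d l' v') : RA.Step l (σ ∘ v) α (σ ∘ d) l' (σ ∘ v') := by
  obtain ⟨g, π, hΔ, hg, hπ⟩ := h
  obtain ⟨⟨hgc, hπc⟩, -⟩ := RA.wf _ hΔ
  refine ⟨g, π, hΔ, ?_, ?_⟩
  · intro a ha
    have hs := hg a ha
    have hc := hgc a ha
    cases a with
    | eq e e' =>
      simp only [Atom.Sat] at hs ⊢
      rw [term_val_perm σ hσ v d e hc.1, term_val_perm σ hσ v d e' hc.2, hs]
    | ne e e' =>
      simp only [Atom.Sat] at hs ⊢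
      rw [term_val_perm σ hσ v d e hc.1, term_val_perm σ hσ v d e' hc.2]
      exact fun hh => hs (σ.injective hh)
  · intro p hp
    have hs := hπ p hp
    show σ (v' p.1) = Term.val (σ ∘ v) (σ ∘ d) p.2
    rw [term_val_perm σ hσ v d p.2 (hπc p hp), hs]

lemma inv_fixes (σ : Equiv.Perm Sig) (hσ : ∀ c ∈ C, σ c = c) :
    ∀ c ∈ C, σ.symm c = c := by
  intro c hc
  have : σ (σ.symm c) = σ c := by rw [σ.apply_symm_apply, hσ c hc]
  exact σ.injective this

lemma sat_perm (RA : RegisterAutomaton Sig X A L C) (f : CTL X Sig L)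
    (hf : CTL.ConstIn C f) :
    ∀ (σ : Equiv.Perm Sig), (∀ c ∈ C, σ c = c) → ∀ (l : L) (v : X → Sig),
      RA.Sat f (l, v) → RA.Sat f (l, σ ∘ v) := by
  induction f with
  | loc l' =>
    intro σ hσ l v h
    exact h
  | eqReg x y =>
    intro σ hσ l v h
    exact congrArg σ h
  | eqConst x c =>
    intro σ hσ l v h
    show σ (v x) = c
    have h' : v x = c := h
    rw [h', hσ c hf]
  | not f ih =>
    intro σ hσ l v h hcon
    apply h
    have := ih hf σ.symm (inv_fixes σ hσ) l (σ ∘ v) hcon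
    have hvv : σ.symm ∘ (σ ∘ v) = v := funext fun x => σ.symm_apply_apply (v x)
    rwa [hvv] at this
  | and f₀ f₁ ih₀ ih₁ =>
    intro σ hσ l v h
    exact ⟨ih₀ hf.1 σ hσ l v h.1, ih₁ hf.2 σ hσ l v h.2⟩
  | EX f ih =>
    intro σ hσ l v h
    obtain ⟨c', ⟨α, d, hs⟩, hsat⟩ := h
    exact ⟨(c'.1, σ ∘ c'.2), ⟨α, σ ∘ d, step_perm RA σ hσ hs⟩,
      ih hf σ hσ c'.1 c'.2 hsat⟩
  | EU f₀ f₁ ih₀ ih₁ =>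
    intro σ hσ l v h
    obtain ⟨k, p, hp0, hstep, h1, h0⟩ := h
    refine ⟨k, fun i => ((p i).1, σ ∘ (p i).2), by simp only [hp0], ?_, ?_, ?_⟩
    · intro i hi
      obtain ⟨α, d, hs⟩ := hstep i hi
      exact ⟨α, σ ∘ d, step_perm RA σ hσ hs⟩
    · exact ih₁ hf.2 σ hσ (p k).1 (p k).2 h1
    · intro i hi
      exact ih₀ hf.1 σ hσ (p i).1 (p i).2 (h0 i hi)
  | EG f ih =>
    intro σ hσ l v h
    obtain ⟨p, hp0, hstep, hall⟩ := h
    refine ⟨fun i => ((p i).1, σ ∘ (p i).2), by simp only [hp0], ?_, ?_⟩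
    · intro i
      obtain ⟨α, d, hs⟩ := hstep i
      exact ⟨α, σ ∘ d, step_perm RA σ hσ hs⟩
    · intro i
      exact ih hf σ hσ (p i).1 (p i).2 (hall i)

open Classical in
/-- The "pattern" of a valuation: which registers are equal, and which equal which constant. -/
noncomputable def pat (C : Finset Sig) (v : X → Sig) :
    (X → X → Prop) × (X → Option {c // c ∈ C}) :=
  (fun x y => v x = v y, fun x => if h : v x ∈ C then some ⟨v x, h⟩ else none)

lemma pat_eq_equivC [Infinite Sig] [Finite X] {u v : X → Sig}
    (h : pat C u = pat C v) : EquivC C u v := by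
  classical
  have h1 : ∀ x y, u x = u y ↔ v x = v y := by
    intro x y
    constructor
    · intro hh
      have := congrFun (congrFun (congrArg Prod.fst h) x) y
      exact (iff_of_eq this).mp hh
    · intro hh
      have := congrFun (congrFun (congrArg Prod.fst h) x) y
      exact (iff_of_eq this).mpr hh
  have h2 : ∀ x, (if h : u x ∈ C then some (⟨u x, h⟩ : {c // c ∈ C}) else none)
      = (if h : v x ∈ C then some (⟨v x, h⟩ : {c // c ∈ C}) else none) := by
    intro x
    exact congrFun (congrArg Prod.snd h) x
  have hmemC : ∀ x, u x ∈ C ↔ v x ∈ C := by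
    intro x
    have := h2 x
    constructor
    · intro hu
      by_contra hv
      rw [dif_pos hu, dif_neg hv] at this
      exact Option.some_ne_none _ this
    · intro hv
      by_contra hu
      rw [dif_neg hu, dif_pos hv] at this
      exact Option.some_ne_none _ this.symm
  have heqC : ∀ x, u x ∈ C → u x = v x := by
    intro x hu
    have hv := (hmemC x).mp hu
    have := h2 x
    rw [dif_pos hu, dif_pos hv] at this
    exact congrArg Subtype.val (Option.some_injective _ this)
  -- the finite domain set and the extension function
  set s : Set Sig := ↑C ∪ Set.range u with hs_def
  have hsfin : s.Finite := C.finite_toSet.union (Set.finite_range u)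
  let F : Sig → Sig := fun a =>
    if a ∈ C then a else if h : ∃ x, u x = a then v (Classical.choose h) else a
  have hFc : ∀ c ∈ C, F c = c := fun c hc => if_pos hc
  have hFu : ∀ x, F (u x) = v x := by
    intro x
    by_cases hu : u x ∈ C
    · have := heqC x hu
      simp only [F, if_pos hu]
      exact this
    · have hex : ∃ x', u x' = u x := ⟨x, rfl⟩
      simp only [F, if_neg hu, dif_pos hex]
      exact (h1 _ x).mp (Classical.choose_spec hex)
  -- case description of F on s
  have hFdesc : ∀ a ∈ s, (a ∈ C ∧ F a = a) ∨
      (∃ x, a = u x ∧ a ∉ C ∧ F a = v x ∧ v x ∉ C) := by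
    intro a ha
    by_cases hc : a ∈ C
    · exact Or.inl ⟨hc, if_pos hc⟩
    · rcases ha with ha | ⟨x, rfl⟩
      · exact absurd ha hc
      · exact Or.inr ⟨x, rfl, hc, hFu x, fun hv => hc ((hmemC x).mpr hv)⟩
  have hFinj : ∀ a ∈ s, ∀ b ∈ s, F a = F b → a = b := by
    intro a ha b hb hab
    rcases hFdesc a ha with ⟨hac, hfa⟩ | ⟨x, rfl, hac, hfa, hvx⟩ <;>
      rcases hFdesc b hb with ⟨hbc, hfb⟩ | ⟨y, rfl, hbc, hfb, hvy⟩
    · rw [hfa, hfb] at hab; exact hab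
    · rw [hfa, hfb] at hab; exact absurd (hab ▸ hac) hvy
    · rw [hfa, hfb] at hab; exact absurd (hab.symm ▸ hbc) hvx
    · rw [hfa, hfb] at hab
      exact (h1 x y).mpr hab
  -- extend to a permutation
  let femb : s ↪ Sig := ⟨fun a => F a.1, fun a b hab => Subtype.ext (hFinj a.1 a.2 b.1 b.2 hab)⟩
  have hcard : Cardinal.mk s < Cardinal.mk Sig := by
    have : Cardinal.mk s < Cardinal.aleph0 := by
      haveI := hsfin.to_subtype
      exact Cardinal.lt_aleph0_of_finite s
    exact lt_of_lt_of_le this (Cardinal.aleph0_le_mk Sig)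
  obtain ⟨g, hg⟩ := Cardinal.extend_function_of_lt femb hcard ⟨Equiv.refl Sig⟩
  refine ⟨g, ?_, ?_⟩
  · intro c hc
    have hmem : (c : Sig) ∈ s := Or.inl hc
    have := hg ⟨c, hmem⟩
    exact this.trans (hFc c hc)
  · intro x
    have hmem : u x ∈ s := Or.inr ⟨x, rfl⟩
    have := hg ⟨u x, hmem⟩
    exact this.trans (hFu x)

end Aux

/-- Model checking reduces to finitely many valuations: there is a finite set `W` of valuations
such that `⊨_RA f` (i.e. `⟨l₀, v⟩ ⊨ f` for every valuation `v`) iff `⟨l₀, w⟩ ⊨ f` for every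
`w ∈ W`; concretely, any set `W` containing a representative of each `∼_C`-equivalence class
has this property. -/
theorem modelCheck_via_representatives {Sig X A L : Type} [Infinite Sig] [Finite X] [Finite A]
    [Finite L] {C : Finset Sig} (RA : RegisterAutomaton Sig X A L C)
    (f : CTL X Sig L) (hf : CTL.ConstIn C f) :
    (∃ W : Set (X → Sig), W.Finite ∧
        ((∀ v : X → Sig, RA.Sat f (RA.init, v)) ↔ ∀ w ∈ W, RA.Sat f (RA.init, w))) ∧
    (∀ W : Set (X → Sig), (∀ v : X → Sig, ∃ w ∈ W, EquivC C w v) →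
        ((∀ v : X → Sig, RA.Sat f (RA.init, v)) ↔ ∀ w ∈ W, RA.Sat f (RA.init, w))) := by
  classical
  have key : ∀ W : Set (X → Sig), (∀ v : X → Sig, ∃ w ∈ W, EquivC C w v) →
      ((∀ v : X → Sig, RA.Sat f (RA.init, v)) ↔ ∀ w ∈ W, RA.Sat f (RA.init, w)) := by
    intro W hW
    constructor
    · intro h w _
      exact h w
    · intro h v
      obtain ⟨w, hwW, σ, hσC, hσw⟩ := hW v
      have hsat := sat_perm RA f hf σ hσC RA.init w (h w hwW)
      have : σ ∘ w = v := funext hσw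
      rwa [this] at hsat
  refine ⟨?_, key⟩
  haveI : Nonempty (X → Sig) := ⟨fun _ => Classical.arbitrary Sig⟩
  refine ⟨Set.range (Function.invFun (pat (X := X) C)), Set.finite_range _, ?_⟩
  apply key
  intro v
  refine ⟨Function.invFun (pat (X := X) C) (pat C v), ⟨pat C v, rfl⟩, ?_⟩
  apply pat_eq_equivC
  exact Function.invFun_eq ⟨v, rfl⟩
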